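/- Let p be prime with |∑_{1 ≤ n < p} λ(n)λ(p−n)| = p − 1, and let 1 ≤ d < p. Then S_λ(dξ) = λ(d)·S_λ(ξ) for all ξ ∈ ℤ/pℤ, where S_λ(ξ) := ∑_{1 ≤ n < p} λ(n)·exp(2πi·nξ/p). -/

import Mathlib

open Finset

def lam (n : ℕ) : ℤ := (-1) ^ (ArithmeticFunction.cardFactors n)

noncomputable def Slam (p : ℕ) (ξ : ℕ) : ℂ :=
  ∑ n ∈ Finset.Ico 1 p, (lam n : ℂ) * Complex.exp (2 * Real.pi * Complex.I * (n * ξ) / p)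


lemma lam_sq (n : ℕ) : lam n * lam n = 1 := by
  unfold lam; rw [← pow_add]; exact Even.neg_one_pow ⟨_, rfl⟩

lemma lam_ne_zero (n : ℕ) : lam n ≠ 0 := by
  intro h
  have := lam_sq n
  rw [h, mul_zero] at this
  exact absurd this (by norm_num)

lemma lam_mul {m n : ℕ} (hm : m ≠ 0) (hn : n ≠ 0) : lam (m * n) = lam m * lam n := by
  unfold lam
  rw [ArithmeticFunction.cardFactors_mul hm hn, pow_add]

lemma lam_one : lam 1 = 1 := by
  unfold lam
  rw [ArithmeticFunction.cardFactors_one, pow_zero]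

lemma lam_pm (n : ℕ) : lam n = 1 ∨ lam n = -1 := by
  unfold lam
  rcases Nat.even_or_odd (ArithmeticFunction.cardFactors n) with he | ho
  · exact Or.inl he.neg_one_pow
  · exact Or.inr ho.neg_one_pow

lemma reflect (p : ℕ) (hp : p.Prime)
    (h : |∑ n ∈ Finset.Ico 1 p, lam n * lam (p - n)| = (p : ℤ) - 1) :
    ∀ n, 1 ≤ n → n < p → lam (p - n) = lam (p - 1) * lam n := by
  have hcard : (Finset.Ico 1 p).card = p - 1 := Nat.card_Ico 1 p
  have h1mem : 1 ∈ Finset.Ico 1 p := by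
    simp [Finset.mem_Ico]; exact hp.one_lt
  have hple : (0:ℤ) ≤ (p:ℤ) - 1 := by
    have := hp.one_lt; omega
  have habs := (abs_eq hple).mp h
  have hcast : ((Finset.Ico 1 p).card : ℤ) = (p:ℤ) - 1 := by
    rw [hcard]; have := hp.one_lt; push_cast [Nat.cast_sub (by omega : 1 ≤ p)]; ring
  rcases habs with hS | hS
  · -- all terms = 1
    have hsum0 : ∑ n ∈ Finset.Ico 1 p, (1 - lam n * lam (p - n)) = 0 := by
      rw [Finset.sum_sub_distrib, Finset.sum_const, nsmul_eq_mul, mul_one, hS, hcast]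
      ring
    have hall : ∀ n ∈ Finset.Ico 1 p, (1 : ℤ) - lam n * lam (p - n) = 0 := by
      intro n hn
      refine (Finset.sum_eq_zero_iff_of_nonneg ?_).mp hsum0 n hn
      intro m _
      rcases lam_pm m with hm | hm <;> rcases lam_pm (p - m) with hm2 | hm2 <;>
        rw [hm, hm2] <;> norm_num
    have h1 : lam (p - 1) = 1 := by
      have := hall 1 h1mem
      rw [lam_one, one_mul] at this
      omega
    intro n hn1 hnp
    have := hall n (by simp [Finset.mem_Ico]; omega)
    have h2 : lam n * lam (p - n) = 1 := by omega
    have : lam n * (lam n * lam (p - n)) = lam n * 1 := by rw [h2]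
    rw [← mul_assoc, lam_sq, one_mul, mul_one] at this
    rw [this, h1, one_mul]
  · -- all terms = -1
    have hsum0 : ∑ n ∈ Finset.Ico 1 p, (1 + lam n * lam (p - n)) = 0 := by
      rw [Finset.sum_add_distrib, Finset.sum_const, nsmul_eq_mul, mul_one, hS, hcast]
      ring
    have hall : ∀ n ∈ Finset.Ico 1 p, (1 : ℤ) + lam n * lam (p - n) = 0 := by
      intro n hn
      refine (Finset.sum_eq_zero_iff_of_nonneg ?_).mp hsum0 n hn
      intro m _
      rcases lam_pm m with hm | hm <;> rcases lam_pm (p - m) with hm2 | hm2 <;>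
        rw [hm, hm2] <;> norm_num
    have h1 : lam (p - 1) = -1 := by
      have := hall 1 h1mem
      rw [lam_one, one_mul] at this
      omega
    intro n hn1 hnp
    have := hall n (by simp [Finset.mem_Ico]; omega)
    have h2 : lam n * lam (p - n) = -1 := by omega
    have h3 : lam n * (lam n * lam (p - n)) = lam n * (-1) := by rw [h2]
    rw [← mul_assoc, lam_sq, one_mul] at h3
    rw [h3, h1]; ring

lemma KI (p : ℕ)
    (hE : ∀ n, 1 ≤ n → n < p → lam (p - n) = lam (p - 1) * lam n)
    (c x : ℕ) (hc : 2 ≤ c) (hx : 1 ≤ x) (h1 : (c - 1) * x < p) (h2 : p < c * x) :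
    lam (c * x - p) = lam c * lam x := by
  obtain ⟨c', rfl⟩ : ∃ c', c = c' + 1 := ⟨c - 1, by omega⟩
  have hc' : 1 ≤ c' := by omega
  have hsplit : (c' + 1) * x = c' * x + x := by ring
  rw [Nat.add_sub_cancel] at h1   -- (c'+1) - 1 = c'
  set X := c' * x with hX
  set r := (c' + 1) * x - p with hr
  set t := p - X with ht
  have hr1 : 1 ≤ r := by omega
  have ht1 : 1 ≤ t := by omega
  have hrt : r + t = x := by omega
  have hkey : c' * r + c' * t = X := by rw [← Nat.mul_add, hrt]
  have hTdef : (c' + 1) * t = c' * t + t := by ring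
  -- c' * r + (c'+1)*t = p
  have hcr1 : 1 ≤ c' * r := Nat.mul_pos hc' hr1
  have hct : 1 ≤ c' * t := Nat.mul_pos hc' ht1
  have hid : c' * r = p - (c' + 1) * t := by omega
  have hT1 : 1 ≤ (c' + 1) * t := by omega
  have hTp : (c' + 1) * t < p := by omega
  have htp : t < p := by omega
  -- lam equations
  have e1 : lam c' * lam r = lam (p - 1) * (lam (c' + 1) * lam t) := by
    rw [← lam_mul (by omega) (by omega), hid, hE _ hT1 hTp,
      lam_mul (by omega) (by omega)]
  have e2 : lam c' * lam x = lam (p - 1) * lam t := by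
    rw [← lam_mul (by omega) (by omega), show c' * x = p - t by omega, hE _ ht1 htp]
  have e3 : (lam c' * lam r) * (lam c' * lam x)
      = (lam (p - 1) * (lam (c' + 1) * lam t)) * (lam (p - 1) * lam t) := by
    rw [e1, e2]
  have e4 : lam r * lam x = lam (c' + 1) := by
    have l : (lam c' * lam r) * (lam c' * lam x) = (lam c' * lam c') * (lam r * lam x) := by
      ring
    have rr : (lam (p - 1) * (lam (c' + 1) * lam t)) * (lam (p - 1) * lam t)
        = (lam (p - 1) * lam (p - 1)) * ((lam t * lam t) * lam (c' + 1)) := by ring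
    rw [l, rr, lam_sq, lam_sq, lam_sq, one_mul, one_mul, one_mul] at e3
    exact e3
  calc lam r = lam r * (lam x * lam x) := by rw [lam_sq, mul_one]
    _ = (lam r * lam x) * lam x := by ring
    _ = lam (c' + 1) * lam x := by rw [e4]

lemma resid_pos (p : ℕ) (hp : p.Prime) {u x : ℕ} (hu1 : 1 ≤ u) (hup : u < p)
    (hx1 : 1 ≤ x) (hxp : x < p) : 1 ≤ (u * x) % p ∧ (u * x) % p < p := by
  constructor
  · rcases Nat.eq_zero_or_pos ((u * x) % p) with h0 | h0
    · exfalso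
      have hdvd : p ∣ u * x := Nat.dvd_of_mod_eq_zero h0
      rcases (Nat.Prime.dvd_mul hp).mp hdvd with hd | hd
      · exact absurd (Nat.le_of_dvd (by omega) hd) (by omega)
      · exact absurd (Nat.le_of_dvd (by omega) hd) (by omega)
    · exact h0
  · exact Nat.mod_lt _ hp.pos

lemma inner (p : ℕ) (hp : p.Prime)
    (hE : ∀ n, 1 ≤ n → n < p → lam (p - n) = lam (p - 1) * lam n)
    (a : ℕ) (ha : a.Prime) (hap : a < p)
    (IH : ∀ b, b < a → 1 ≤ b → b < p →
      ∀ y, 1 ≤ y → y < p → lam ((b * y) % p) = lam b * lam y) :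
    ∀ x, 1 ≤ x → x < p → lam ((a * x) % p) = lam a * lam x := by
  intro x
  induction x using Nat.strong_induction_on with
  | _ x IHx =>
  intro hx1 hxp
  have ha1 : 1 ≤ a := ha.one_le
  by_cases hax : a * x < p
  · rw [Nat.mod_eq_of_lt hax, lam_mul (by omega) (by omega)]
  · push_neg at hax
    have hx2 : 2 ≤ x := by
      by_contra hcon
      have hx1' : x = 1 := by omega
      rw [hx1', mul_one] at hax
      omega
    have hndvd : ¬ p ∣ a * x := by
      intro hdvd
      rcases (Nat.Prime.dvd_mul hp).mp hdvd with hd | hd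
      · exact absurd (Nat.le_of_dvd (by omega) hd) (by omega)
      · exact absurd (Nat.le_of_dvd (by omega) hd) (by omega)
    have haxp : p < a * x :=
      lt_of_le_of_ne hax (fun hh => hndvd (hh ▸ dvd_refl p))
    set c' := p / x with hc'
    set X := c' * x with hX
    have hXle : X ≤ p := Nat.div_mul_le_self p x
    have hcomm : x * c' = X := Nat.mul_comm x c'
    have hdam := Nat.div_add_mod p x   -- x * (p / x) + p % x = p
    rw [← hc'] at hdam
    have hmlt : p % x < x := Nat.mod_lt _ (by omega)
    have hX2 : p < X + x := by omega
    have hXne : X ≠ p := by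
      intro hne
      have hdvd : x ∣ p := ⟨c', by omega⟩
      rcases (Nat.Prime.eq_one_or_self_of_dvd hp x hdvd) with h | h <;> omega
    have hX1 : X < p := by omega
    have hc'1 : 1 ≤ c' := by
      rcases Nat.eq_zero_or_pos c' with h | h
      · exfalso; rw [hX, h, zero_mul] at hX2; omega
      · exact h
    have hc'a : c' < a := by
      have : c' * x < a * x := by omega
      exact Nat.lt_of_mul_lt_mul_right this
    have hsplit : (c' + 1) * x = X + x := by rw [hX]; ring
    rcases Nat.lt_or_ge (c' + 1) a with hca | hca
    · -- c = c' + 1 < a : reduce via e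
      set c := c' + 1 with hc
      set e := c * x - p with he
      have he1 : 1 ≤ e := by omega
      have hex : e < x := by omega
      have hep : e < p := by omega
      have hKe : lam e = lam c * lam x :=
        KI p hE c x (by omega) (by omega) (by rw [hc, Nat.add_sub_cancel]; exact hX1) (by omega)
      set u := (a * x) % p with hu
      obtain ⟨hu1, hup⟩ := resid_pos p hp ha1 hap hx1 hxp
      -- (c * u) % p = (a * e) % p
      have hcong : (c * u) % p = (a * e) % p := by
        have m1 : c * u ≡ c * (a * x) [MOD p] := Nat.ModEq.mul_left c (Nat.mod_modEq _ _)
        have m2 : a * e ≡ a * (c * x) [MOD p] := by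
          refine Nat.ModEq.mul_left a ?_
          show e ≡ c * x [MOD p]
          have hcx : c * x = e + p := by omega
          rw [hcx]
          exact (Nat.add_mod_right e p).symm
        have m3 : c * (a * x) = a * (c * x) := by ring
        have := m1.trans (m3 ▸ m2.symm)
        exact this
      have hL : lam ((c * u) % p) = lam c * lam u :=
        IH c hca (by omega) (by omega) u hu1 hup
      have hR : lam ((a * e) % p) = lam a * lam e := IHx e (by omega) he1 hep
      rw [hcong, hR, hKe] at hL
      -- lam c * lam u = lam a * (lam c * lam x)
      have : lam c * lam u = lam c * (lam a * lam x) := by rw [← hL]; ring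
      exact mul_left_cancel₀ (lam_ne_zero c) this
    · -- c' + 1 = a : direct KI
      have hceq : c' + 1 = a := by omega
      have haxX : a * x = X + x := by rw [← hceq]; exact hsplit
      have hmod : (a * x) % p = a * x - p := by
        rw [Nat.mod_eq_sub_mod (by omega)]
        exact Nat.mod_eq_of_lt (by omega)
      rw [hmod, ← hceq]
      exact KI p hE (c' + 1) x (by omega) (by omega) (by simpa using hX1) (by omega)

lemma Mlem (p : ℕ) (hp : p.Prime)
    (hE : ∀ n, 1 ≤ n → n < p → lam (p - n) = lam (p - 1) * lam n) :
    ∀ a, 1 ≤ a → a < p → ∀ x, 1 ≤ x → x < p → lam ((a * x) % p) = lam a * lam x := by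
  intro a
  induction a using Nat.strong_induction_on with
  | _ a IHa =>
  intro ha1 hap x hx1 hxp
  rcases eq_or_ne a 1 with rfl | hane1
  · rw [one_mul, Nat.mod_eq_of_lt hxp, lam_one, one_mul]
  by_cases haP : a.Prime
  · exact inner p hp hE a haP hap
      (fun b hb hb1 hbp y hy1 hyp => IHa b hb hb1 hbp y hy1 hyp) x hx1 hxp
  · -- composite
    set v := a.minFac with hv
    have hvP : v.Prime := Nat.minFac_prime hane1
    have hvdvd : v ∣ a := Nat.minFac_dvd a
    set u := a / v with hu
    have huv : v * u = a := Nat.mul_div_cancel' hvdvd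
    have hu1 : u ≠ 1 := by
      intro h1
      rw [h1, mul_one] at huv
      exact haP (huv ▸ hvP)
    have hu0 : 1 ≤ u := by
      rcases Nat.eq_zero_or_pos u with h | h
      · exfalso; rw [h, mul_zero] at huv; omega
      · exact h
    have hu2 : 2 ≤ u := by omega
    have hv2 : 2 ≤ v := hvP.two_le
    have hua : u < a := by
      calc u < v * u := by nlinarith
      _ = a := huv
    have hva : v < a := by
      calc v < v * u := by nlinarith
      _ = a := huv
    have hkey : (a * x) % p = (v * ((u * x) % p)) % p := by
      conv_lhs => rw [← huv, mul_assoc, Nat.mul_mod, Nat.mod_eq_of_lt (by omega : v < p)]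
    obtain ⟨hy1, hyp⟩ := resid_pos p hp (by omega : 1 ≤ u) (by omega : u < p) hx1 hxp
    rw [hkey, IHa v hva (by omega) (by omega) _ hy1 hyp,
      IHa u hua (by omega) (by omega) x hx1 hxp, ← mul_assoc,
      ← lam_mul (by omega) (by omega), huv]

theorem stmt_10 (p : ℕ) (hp : p.Prime)
    (h : |∑ n ∈ Finset.Ico 1 p, lam n * lam (p - n)| = (p : ℤ) - 1)
    (d : ℕ) (hd1 : 1 ≤ d) (hdp : d < p) :
    ∀ ξ : ℕ, Slam p (d * ξ) = (lam d : ℂ) * Slam p ξ := by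
  intro ξ
  haveI : Fact p.Prime := ⟨hp⟩
  haveI : NeZero p := ⟨hp.ne_zero⟩
  have hE := reflect p hp h
  have hM := Mlem p hp hE
  have hd0 : (d : ZMod p) ≠ 0 := by
    intro hz
    have : ((d : ℕ) : ZMod p).val = 0 := by rw [hz]; simp
    rw [ZMod.val_cast_of_lt hdp] at this
    omega
  unfold Slam
  rw [Finset.mul_sum]
  refine Finset.sum_nbij' (i := fun n => (d * n) % p)
    (j := fun m => ((d : ZMod p)⁻¹ * (m : ZMod p)).val) ?_ ?_ ?_ ?_ ?_
  · intro n hn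
    rw [Finset.mem_Ico] at hn ⊢
    exact resid_pos p hp hd1 hdp hn.1 hn.2
  · intro m hm
    rw [Finset.mem_Ico] at hm ⊢
    refine ⟨?_, ZMod.val_lt _⟩
    rcases Nat.eq_zero_or_pos ((d : ZMod p)⁻¹ * (m : ZMod p)).val with h0 | h0
    · exfalso
      have hz : (d : ZMod p)⁻¹ * (m : ZMod p) = 0 := (ZMod.val_eq_zero _).mp h0
      rcases mul_eq_zero.mp hz with h1 | h1
      · exact (inv_ne_zero hd0) h1
      · have h2 : ((m : ℕ) : ZMod p).val = 0 := by rw [h1]; simp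
        rw [ZMod.val_cast_of_lt hm.2] at h2
        omega
    · exact h0
  · intro n hn
    rw [Finset.mem_Ico] at hn
    have hcast : (((d * n) % p : ℕ) : ZMod p) = (d : ZMod p) * (n : ZMod p) := by
      rw [ZMod.natCast_mod]; push_cast; ring
    show ((d : ZMod p)⁻¹ * (((d * n) % p : ℕ) : ZMod p)).val = n
    rw [hcast, ← mul_assoc, inv_mul_cancel₀ hd0, one_mul, ZMod.val_cast_of_lt hn.2]
  · intro m hm
    rw [Finset.mem_Ico] at hm
    set v := ((d : ZMod p)⁻¹ * (m : ZMod p)).val with hv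
    have hcast : (((d * v) % p : ℕ) : ZMod p) = (m : ZMod p) := by
      rw [ZMod.natCast_mod]
      push_cast
      rw [hv, ZMod.natCast_val, ZMod.cast_id]
      rw [← mul_assoc, mul_inv_cancel₀ hd0, one_mul]
    have h1 : (((d * v) % p : ℕ) : ZMod p).val = ((m : ℕ) : ZMod p).val := by rw [hcast]
    rw [ZMod.val_cast_of_lt (Nat.mod_lt _ hp.pos), ZMod.val_cast_of_lt hm.2] at h1
    exact h1
  · intro n hn
    rw [Finset.mem_Ico] at hn
    set m := (d * n) % p with hm
    obtain ⟨hm1, hmp⟩ := resid_pos p hp hd1 hdp hn.1 hn.2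
    have hlam : lam m = lam d * lam n := hM d hd1 hdp n hn.1 hn.2
    have hlam2 : (lam n : ℂ) = (lam d : ℂ) * (lam m : ℂ) := by
      have : lam d * lam m = lam n := by
        rw [hlam, ← mul_assoc, lam_sq, one_mul]
      push_cast [← this]
      ring
    -- exponential part
    set q := (d * n) / p with hq
    have hdn : d * n = p * q + m := by rw [hq, hm]; exact (Nat.div_add_mod (d * n) p).symm
    have hexp : Complex.exp (2 * Real.pi * Complex.I * ((n : ℂ) * ((d * ξ : ℕ) : ℂ)) / p)
        = Complex.exp (2 * Real.pi * Complex.I * ((m : ℂ) * (ξ : ℂ)) / p) := by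
      have hnat : n * (d * ξ) = (q * ξ) * p + m * ξ := by
        calc n * (d * ξ) = (d * n) * ξ := by ring
          _ = (p * q + m) * ξ := by rw [hdn]
          _ = (q * ξ) * p + m * ξ := by ring
      have hc1 : (n : ℂ) * ((d * ξ : ℕ) : ℂ) = ((n * (d * ξ) : ℕ) : ℂ) := by push_cast; ring
      rw [hc1, hnat]
      have hp0 : (p : ℂ) ≠ 0 := by
        exact_mod_cast Nat.cast_ne_zero.mpr hp.ne_zero
      have harg : 2 * Real.pi * Complex.I * (((q * ξ) * p + m * ξ : ℕ) : ℂ) / p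
          = ((q * ξ : ℤ) : ℂ) * (2 * Real.pi * Complex.I)
            + 2 * Real.pi * Complex.I * ((m : ℂ) * (ξ : ℂ)) / p := by
        push_cast
        field_simp
      rw [harg, Complex.exp_add, Complex.exp_int_mul_two_pi_mul_I, one_mul]
    rw [hexp, hlam2]
    ring
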